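/- Let K be a field. The power series ring K[[y]] has infinite transcendence degree over K. -/

import Mathlib

open Cardinal

/-- Over a countable field, the power series ring contains `n` algebraically independent
elements, by a cardinality argument on a transcendence basis. -/
lemma exists_algInd_powerSeries (F : Type*) [Field F] [Countable F] (n : ℕ) :
    ∃ g : Fin n → PowerSeries F, AlgebraicIndependent F g := by
  haveI : FaithfulSMul F (PowerSeries F) :=
    (faithfulSMul_iff_algebraMap_injective F (PowerSeries F)).2 (algebraMap F (PowerSeries F)).injective
  obtain ⟨s, hs⟩ := exists_isTranscendenceBasis F (PowerSeries F)
  -- the power series ring has cardinality at least `2 ^ ℵ₀`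
  have hEbig : (2 : Cardinal) ^ ℵ₀ ≤ #(PowerSeries F) := by
    have h1 : #(ℕ → F) ≤ #(PowerSeries F) :=
      Cardinal.mk_le_of_injective (f := fun f => PowerSeries.mk f)
        (fun a b hab => funext fun m => by
          simpa using congrArg (PowerSeries.coeff m) hab)
    have h2 : (2 : Cardinal) ^ ℵ₀ ≤ #(ℕ → F) := by
      rw [Cardinal.mk_arrow, Cardinal.mk_nat, Cardinal.lift_aleph0, Cardinal.lift_uzero]
      exact Cardinal.power_le_power_right
        (by rw [Cardinal.two_le_iff]; obtain ⟨a, b, hab⟩ := exists_pair_ne F; exact ⟨a, b, hab⟩)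
    exact h2.trans h1
  have hF : #F ≤ ℵ₀ := Cardinal.mk_le_aleph0
  have hsinf : Infinite s := by
    rw [Cardinal.infinite_iff]
    by_contra hlt
    push_neg at hlt
    have hsle : #s ≤ ℵ₀ := le_of_lt hlt
    have hle : #(PowerSeries F) ≤ ℵ₀ := by
      rcases isEmpty_or_nonempty s with he | hne
      · haveI : Algebra.IsAlgebraic F (PowerSeries F) :=
          (hs.isEmpty_iff_isAlgebraic).1 he
        exact (Algebra.IsAlgebraic.cardinalMk_le_max F (PowerSeries F)).trans
          (max_le hF le_rfl)
      · have := hs.lift_cardinalMk_eq_max_lift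
        simp only [Cardinal.lift_id] at this
        rw [this]
        exact max_le (max_le hF hsle) le_rfl
    exact absurd (hEbig.trans hle) (not_le.2 (Cardinal.cantor ℵ₀))
  let e : Fin n ↪ s := (Fin.valEmbedding).trans (Infinite.natEmbedding s)
  exact ⟨fun i => (e i : PowerSeries F), hs.1.comp e e.injective⟩

/-- Algebraically independent power series over a subfield `F` of `K` remain algebraically
independent over `K` after mapping the coefficients into `K`. -/
lemma algebraicIndependent_map_powerSeries {F K : Type*} [Field F] [Field K] [Algebra F K]
    {n : ℕ} {g : Fin n → PowerSeries F} (hg : AlgebraicIndependent F g) :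
    AlgebraicIndependent K (fun i => PowerSeries.map (algebraMap F K) (g i)) := by
  rw [algebraicIndependent_iff] at hg ⊢
  intro P hP
  apply MvPolynomial.ext
  intro d
  rw [MvPolynomial.coeff_zero, ← Module.forall_dual_apply_eq_zero_iff F (P.coeff d)]
  intro lam
  set Pl : MvPolynomial (Fin n) F :=
    ∑ e ∈ P.support, MvPolynomial.monomial e (lam (P.coeff e)) with hPl
  have hcoeff : ∀ m : ℕ, PowerSeries.coeff m (MvPolynomial.aeval g Pl)
      = lam (PowerSeries.coeff (R := K) m
          (MvPolynomial.aeval (fun i => PowerSeries.map (algebraMap F K) (g i)) P)) := by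
    intro m
    conv_rhs => rw [P.as_sum]
    rw [hPl, map_sum, map_sum, map_sum, map_sum, map_sum]
    refine Finset.sum_congr rfl fun e _ => ?_
    rw [MvPolynomial.aeval_monomial, MvPolynomial.aeval_monomial]
    have hprod : (e.prod fun i k => (PowerSeries.map (algebraMap F K) (g i)) ^ k)
        = PowerSeries.map (algebraMap F K) (e.prod fun i k => g i ^ k) := by
      simp only [map_finsuppProd, map_pow]
    rw [hprod, PowerSeries.algebraMap_apply, PowerSeries.algebraMap_apply,
      PowerSeries.coeff_C_mul, PowerSeries.coeff_C_mul, PowerSeries.coeff_map]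
    simp only [Algebra.algebraMap_self_apply]
    rw [mul_comm (MvPolynomial.coeff e P), ← Algebra.smul_def, map_smul, smul_eq_mul,
      mul_comm]
  have hPl0 : MvPolynomial.aeval g Pl = 0 := by
    ext m
    rw [hcoeff, hP, map_zero, map_zero, map_zero]
  have := hg Pl hPl0
  have hc : MvPolynomial.coeff d Pl = lam (MvPolynomial.coeff d P) := by
    rw [hPl, MvPolynomial.coeff_sum]
    simp only [MvPolynomial.coeff_monomial]
    rw [Finset.sum_ite_eq' P.support d fun e => lam (P.coeff e)]
    split_ifs with h
    · rfl
    · rw [MvPolynomial.notMem_support_iff.1 h, map_zero]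
  rw [← hc, this, MvPolynomial.coeff_zero]

/-- The power series ring `K[[y]]` over a field `K` has infinite transcendence degree over `K`:
for every `n` there exist `n` elements of `K[[y]]` which are algebraically independent over
`K`. -/
theorem stmt3 (K : Type*) [Field K] (n : ℕ) :
    ∃ f : Fin n → PowerSeries K, AlgebraicIndependent K f := by
  haveI : CharP K (ringChar K) := ringChar.charP K
  rcases CharP.char_is_prime_or_zero K (ringChar K) with hp | h0
  · haveI : Fact (ringChar K).Prime := ⟨hp⟩
    letI : Algebra (ZMod (ringChar K)) K := ZMod.algebra _ _
    obtain ⟨g, hg⟩ := exists_algInd_powerSeries (ZMod (ringChar K)) n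
    exact ⟨_, algebraicIndependent_map_powerSeries hg⟩
  · haveI : CharZero K := by
      rw [h0] at this
      exact CharP.charP_to_charZero K
    obtain ⟨g, hg⟩ := exists_algInd_powerSeries ℚ n
    exact ⟨_, algebraicIndependent_map_powerSeries hg⟩
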